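/- Let M' be the (s-1)×(s-1) matrix with entries M'(i,i) = Σ_{k=1,…,s, k≠i} 1/(t_k - t_i) and M'(i,j) = 1/(t_i - t_j) for i ≠ j, where t₁,…,t_s are distinct reals. Then det(M') = (s-1)! · ∏_{j=1}^{s-1} 1/(t_s - t_j). -/

import Mathlib

open Finset Polynomial Matrix

namespace DetM

variable {n : ℕ} (t : Fin (n + 1) → ℝ)

noncomputable def w (i : Fin (n+1)) : ℝ := ∏ j ∈ univ.erase i, (t i - t j)⁻¹
noncomputable def P (i : Fin (n+1)) : ℝ[X] := ∏ j ∈ univ.erase i, (X - C (t j))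
noncomputable def L (i : Fin (n+1)) : ℝ[X] := C (w t i) * P t i
noncomputable def D : Matrix (Fin (n+1)) (Fin (n+1)) ℝ :=
  of fun i j => ((L t j).derivative).eval (t i)
def V : Matrix (Fin (n+1)) (Fin (n+1)) ℝ := of fun i j => t i ^ (j:ℕ)
def N (n : ℕ) : Matrix (Fin (n+1)) (Fin (n+1)) ℝ :=
  of fun i j => if (j:ℕ) = (i:ℕ)+1 then ((j:ℕ):ℝ) else 0

lemma L_eq_basis (i : Fin (n+1)) : L t i = Lagrange.basis univ t i := by
  rw [Lagrange.basis, L, w, P]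
  simp_rw [Lagrange.basisDivisor]
  rw [prod_mul_distrib, map_prod]

lemma hsub (ht : Function.Injective t) {i j : Fin (n+1)} (h : i ≠ j) : t i - t j ≠ 0 :=
  sub_ne_zero.mpr (fun hc => h (ht hc))

lemma w_ne (ht : Function.Injective t) (i : Fin (n+1)) : w t i ≠ 0 := by
  rw [w]
  refine prod_ne_zero_iff.mpr fun j hj => inv_ne_zero (hsub t ht ?_)
  exact fun hc => (mem_erase.mp hj).1 hc.symm

lemma derivative_finset_prod {ι : Type*} [DecidableEq ι] (s : Finset ι) (f : ι → ℝ[X]) :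
    derivative (∏ i ∈ s, f i) = ∑ i ∈ s, (∏ j ∈ s.erase i, f j) * derivative (f i) := by
  classical
  induction s using Finset.induction_on with
  | empty => simp
  | insert a s ha ih =>
    rw [Finset.prod_insert ha, derivative_mul, ih, Finset.sum_insert ha]
    rw [Finset.erase_insert ha, mul_comm]
    congr 1
    rw [Finset.mul_sum]
    refine Finset.sum_congr rfl fun i hi => ?_
    rw [Finset.erase_insert_of_ne (fun h => ha (by rwa [← h] at hi)), Finset.prod_insert]
    · ring
    · exact fun h => ha ((Finset.erase_subset _ _) h)

lemma eval_derivative_P (i j : Fin (n+1)) :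
    eval (t i) (derivative (P t j)) =
      ∑ m ∈ univ.erase j, ∏ k ∈ (univ.erase j).erase m, (t i - t k) := by
  rw [P, derivative_finset_prod]
  simp only [derivative_sub, derivative_X, derivative_C, sub_zero, mul_one]
  simp [eval_finset_sum, eval_prod]

lemma key1 {i j : Fin (n+1)} (hij : i ≠ j) :
    eval (t i) (derivative (P t j)) = ∏ k ∈ (univ.erase j).erase i, (t i - t k) := by
  rw [eval_derivative_P]
  apply Finset.sum_eq_single
  · intro m hm hmi
    apply prod_eq_zero (i := i)
    · exact mem_erase.mpr ⟨fun h => hmi h.symm, mem_erase.mpr ⟨hij, mem_univ i⟩⟩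
    · simp
  · intro h
    exact absurd (mem_erase.mpr ⟨hij, mem_univ i⟩) h

lemma hprodsub_ne (ht : Function.Injective t) (i : Fin (n+1)) (S : Finset (Fin (n+1)))
    (hS : i ∉ S) : ∏ k ∈ S, (t i - t k) ≠ 0 := by
  refine prod_ne_zero_iff.mpr fun k hk => sub_ne_zero.mpr fun hc => ?_
  exact hS (ht hc ▸ hk)

lemma key_w_mul (ht : Function.Injective t) (i m : Fin (n+1)) (hm : m ∈ univ.erase i) :
    (∏ j ∈ univ.erase i, (t i - t j)⁻¹) * ∏ k ∈ (univ.erase i).erase m, (t i - t k)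
      = (t i - t m)⁻¹ := by
  rw [← Finset.mul_prod_erase _ _ hm, prod_inv_distrib]
  rw [mul_assoc, inv_mul_cancel₀]
  · ring
  · exact hprodsub_ne t ht i _ (fun h => (mem_erase.mp (mem_of_mem_erase h)).1 rfl)

lemma D_diag (ht : Function.Injective t) (i : Fin (n+1)) :
    D t i i = ∑ k ∈ univ.erase i, (t i - t k)⁻¹ := by
  rw [D, of_apply, L, derivative_C_mul, eval_mul, eval_C, eval_derivative_P, Finset.mul_sum]
  exact Finset.sum_congr rfl fun m hm => key_w_mul t ht i m hm

lemma D_off (i j : Fin (n+1)) (hij : i ≠ j) :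
    D t i j = w t j * ∏ k ∈ (univ.erase j).erase i, (t i - t k) := by
  rw [D, of_apply, L, derivative_C_mul, eval_mul, eval_C, key1 t hij]

lemma interp (ht : Function.Injective t) (m : Fin (n+1)) :
    (X:ℝ[X])^(m:ℕ) = ∑ j, C (t j ^ (m:ℕ)) * L t j := by
  have hinj : Set.InjOn t (univ : Finset (Fin (n+1))) := fun a _ b _ h => ht h
  have hd : ((X:ℝ[X])^(m:ℕ)).degree < ((univ : Finset (Fin (n+1))).card : ℕ) := by
    rw [degree_X_pow, card_univ, Fintype.card_fin]
    exact_mod_cast Nat.lt_succ_of_le (Nat.le_of_lt_succ m.isLt)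
  have h := Lagrange.eq_interpolate hinj hd
  rw [Lagrange.interpolate_apply] at h
  simp only [eval_pow, eval_X] at h
  simp_rw [L_eq_basis]
  exact h

lemma DV (ht : Function.Injective t) : D t * V t = V t * N n := by
  ext i m
  rw [mul_apply, mul_apply]
  have lhs : ∑ j, D t i j * V t j (m : Fin (n+1)) = ((m:ℕ):ℝ) * t i ^ ((m:ℕ) - 1) := by
    have : ∀ j, D t i j * V t j m = eval (t i) (derivative (C (t j ^ (m:ℕ)) * L t j)) := by
      intro j
      rw [derivative_C_mul, eval_mul, eval_C, D, of_apply, V, of_apply, mul_comm]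
    simp_rw [this]
    rw [← eval_finset_sum]
    rw [← derivative_sum, ← interp t ht m, derivative_X_pow, eval_mul, eval_C, eval_pow, eval_X]
  rw [lhs]
  -- RHS
  rcases Nat.eq_zero_or_pos (m:ℕ) with h0 | hpos
  · rw [h0]
    simp only [Nat.cast_zero, zero_mul]
    symm
    apply Finset.sum_eq_zero
    intro k _
    rw [N, of_apply, h0]
    simp
  · obtain ⟨p, hp⟩ := Nat.exists_eq_succ_of_ne_zero (Nat.pos_iff_ne_zero.mp hpos)
    have hpn : p < n + 1 := by omega
    rw [Finset.sum_eq_single (⟨p, hpn⟩ : Fin (n+1))]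
    · rw [V, of_apply, N, of_apply, if_pos (by simp [hp]), hp]
      push_cast
      ring
    · intro k _ hk
      rw [N, of_apply, if_neg, mul_zero]
      intro hc
      exact hk (Fin.ext (show (k:ℕ) = p by omega))
    · intro h
      exact absurd (mem_univ _) h

lemma detV_ne (ht : Function.Injective t) : (V t).det ≠ 0 := by
  have hV : V t = Matrix.vandermonde t := rfl
  rw [hV, Matrix.det_vandermonde]
  refine prod_ne_zero_iff.mpr fun i _ => prod_ne_zero_iff.mpr fun j hj => ?_
  refine hsub t ht fun h : j = i => ?_
  subst h
  exact absurd (mem_Ioi.mp hj) (lt_irrefl _)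

lemma detN_zero : (N n).det = 0 := by
  apply Matrix.det_eq_zero_of_column_eq_zero (0 : Fin (n+1))
  intro i
  rw [N, of_apply, if_neg (by simp)]

lemma detD_zero (ht : Function.Injective t) : (D t).det = 0 := by
  have h := congrArg Matrix.det (DV t ht)
  rw [Matrix.det_mul, Matrix.det_mul, detN_zero, mul_zero] at h
  exact (mul_eq_zero.mp h).resolve_right (detV_ne t ht)

-- coefficient identity: ∑ k, w k * t k ^ m = δ_{m,n}
lemma P_monic (i : Fin (n+1)) : (P t i).Monic :=
  monic_prod_of_monic _ _ fun j _ => monic_X_sub_C (t j)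

lemma P_natDegree (i : Fin (n+1)) : (P t i).natDegree = n := by
  rw [P, natDegree_prod _ _ (fun j _ => X_sub_C_ne_zero (t j))]
  simp only [natDegree_X_sub_C]
  rw [Finset.sum_const, card_erase_of_mem (mem_univ i), card_univ, Fintype.card_fin]
  simp

lemma coeff_L (i : Fin (n+1)) : (L t i).coeff n = w t i := by
  rw [L, coeff_C_mul]
  have := (P_monic t i).coeff_natDegree
  rw [P_natDegree t i] at this
  rw [this, mul_one]

lemma wV (ht : Function.Injective t) (m : Fin (n+1)) :
    ∑ k, w t k * t k ^ (m:ℕ) = if m = Fin.last n then 1 else 0 := by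
  have h := congrArg (fun q => Polynomial.coeff q n) (interp t ht m)
  simp only [coeff_X_pow, finset_sum_coeff, coeff_C_mul, coeff_L] at h
  rw [Finset.sum_congr rfl (fun k _ => mul_comm (t k ^ (m:ℕ)) (w t k))] at h
  rw [← h]
  rcases eq_or_ne m (Fin.last n) with hm | hm
  · rw [if_pos hm, if_pos (by simp [hm, Fin.last])]
  · rw [if_neg hm, if_neg]
    intro hc
    exact hm (Fin.ext (by simp [hc, Fin.last]))

end DetM
section Part2
open Finset Polynomial Matrix
namespace DetM
variable {n : ℕ} (t : Fin (n + 1) → ℝ)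

noncomputable def u (i : Fin (n+1)) : ℝ := (V t)⁻¹ i (Fin.last n)
def vv (j : Fin (n+1)) : ℝ := t (Fin.last n) ^ (j:ℕ)

lemma hVunit (ht : Function.Injective t) : IsUnit (V t).det :=
  isUnit_iff_ne_zero.mpr (detV_ne t ht)

lemma u_last (ht : Function.Injective t) : u t (Fin.last n) = w t (Fin.last n) := by
  have hwv : (fun i => w t i) ᵥ* (V t) = Pi.single (Fin.last n) 1 := by
    funext m
    rw [Matrix.vecMul, dotProduct]
    simp only [V, of_apply]
    rw [wV t ht m, Pi.single_apply]
  have h2 : (fun i => w t i) = Pi.single (Fin.last n) 1 ᵥ* (V t)⁻¹ := by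
    rw [← hwv, Matrix.vecMul_vecMul, Matrix.mul_nonsing_inv _ (hVunit t ht), Matrix.vecMul_one]
  have h3 := congrFun h2 (Fin.last n)
  rw [Matrix.vecMul, dotProduct] at h3
  have h4 : ∑ i : Fin (n+1), (Pi.single (Fin.last n) (1:ℝ) : Fin (n+1) → ℝ) i * (V t)⁻¹ i (Fin.last n)
      = (V t)⁻¹ (Fin.last n) (Fin.last n) := by
    simp [Pi.single_apply]
  rw [u, h3, h4]

lemma stepA (ht : Function.Injective t) :
    (of fun i j => D t i j + (if i = Fin.last n ∧ j = Fin.last n then 1 else 0)) * V t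
      = V t * (N n + of fun i j => u t i * vv t j) := by
  have hVV : V t * (V t)⁻¹ = 1 := Matrix.mul_nonsing_inv _ (hVunit t ht)
  ext i j
  rw [mul_apply, mul_apply]
  simp only [of_apply, Matrix.add_apply, add_mul, mul_add]
  rw [Finset.sum_add_distrib, Finset.sum_add_distrib]
  congr 1
  · have h := congrFun (congrFun (DV t ht) i) j
    rw [mul_apply, mul_apply] at h
    exact h
  · have h2 : ∑ k, V t i k * (u t k * vv t j) = ((V t * (V t)⁻¹) i (Fin.last n)) * vv t j := by
      rw [mul_apply, Finset.sum_mul]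
      exact Finset.sum_congr rfl fun k _ => by rw [u]; ring
    rw [h2, hVV, Matrix.one_apply]
    rcases eq_or_ne i (Fin.last n) with hi | hi
    · subst hi
      simp [V, vv, Finset.sum_ite_eq']
    · rw [if_neg hi, zero_mul]
      apply Finset.sum_eq_zero
      intro k _
      rw [if_neg (fun hc => hi hc.1), zero_mul]

lemma detDplus (ht : Function.Injective t) :
    (of fun i j => D t i j + (if i = Fin.last n ∧ j = Fin.last n then 1 else 0)
      : Matrix (Fin (n+1)) (Fin (n+1)) ℝ).det
    = (N n + of fun i j => u t i * vv t j).det := by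
  have h := congrArg Matrix.det (stepA t ht)
  rw [Matrix.det_mul, Matrix.det_mul] at h
  rw [mul_comm] at h
  exact mul_left_cancel₀ (detV_ne t ht) h

def U : Matrix (Fin (n+1)) (Fin (n+1)) ℝ :=
  of fun i j => if i = j then 1 else if i = 0 then -(vv t j) else 0

lemma detU : (U t).det = 1 := by
  have htri : (U t).BlockTriangular id := by
    intro i j hji
    have hij : i ≠ j := fun h => absurd (h ▸ hji) (lt_irrefl _)
    have hi0 : i ≠ 0 := by
      intro h
      subst h
      simp at hji
    rw [U, of_apply, if_neg hij, if_neg hi0]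
  rw [Matrix.det_of_upperTriangular htri]
  simp [U]

lemma mulU (M : Matrix (Fin (n+1)) (Fin (n+1)) ℝ) (i j : Fin (n+1)) :
    (M * U t) i j = M i j + M i 0 * (if j = 0 then 0 else -(vv t j)) := by
  rw [mul_apply]
  have key : ∀ k, M i k * U t k j
      = (if k = j then M i k else 0)
        + (if k = 0 then M i k * (if j = 0 then 0 else -(vv t j)) else 0) := by
    intro k
    rw [U, of_apply]
    rcases eq_or_ne k j with h | h
    · subst h
      rcases eq_or_ne k 0 with h0 | h0
      · subst h0; simp
      · simp [h0]
    · rcases eq_or_ne k 0 with h0 | h0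
      · subst h0
        simp [h, Ne.symm h]
      · simp [h, h0]
  simp_rw [key]
  rw [Finset.sum_add_distrib, Finset.sum_ite_eq' univ j, Finset.sum_ite_eq' univ 0]
  simp

lemma NYU (ht : Function.Injective t) :
    (N n + of fun i j => u t i * vv t j) * U t
      = of fun i j => N n i j + (if j = 0 then u t i else 0) := by
  ext i j
  rw [mulU]
  simp only [Matrix.add_apply, of_apply]
  have hN0 : N n i 0 = 0 := by rw [N, of_apply, if_neg (by simp)]
  have hv0 : vv t 0 = 1 := by rw [vv]; norm_num
  rcases eq_or_ne j 0 with hj | hj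
  · subst hj
    rw [if_pos rfl, if_pos rfl, hN0, hv0]
    ring
  · rw [if_neg hj, if_neg hj, hN0, hv0]
    ring

lemma fact_prod : ∏ i : Fin n, (((i:ℕ)+1 : ℕ) : ℝ) = (n.factorial : ℝ) := by
  induction n with
  | zero => simp
  | succ m ih =>
    rw [Fin.prod_univ_castSucc]
    simp only [Fin.coe_castSucc, Fin.val_last]
    rw [ih]
    rw [Nat.factorial_succ]
    push_cast
    ring

lemma detB2 (ht : Function.Injective t) :
    (of fun i j => N n i j + (if j = 0 then u t i else 0) : Matrix (Fin (n+1)) (Fin (n+1)) ℝ).det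
      = (-1:ℝ)^n * ((n.factorial : ℝ) * u t (Fin.last n)) := by
  set B : Matrix (Fin (n+1)) (Fin (n+1)) ℝ :=
    of fun i j => N n i j + (if j = 0 then u t i else 0) with hB
  have hperm := Matrix.det_permute' (finRotate (n+1)) B
  set Cm := B.submatrix id (finRotate (n+1)) with hCm
  have hrot : ∀ j : Fin (n+1), finRotate (n+1) j = j + 1 := finRotate_succ_apply
  have hCtri : Cm.BlockTriangular id := by
    intro i j hji
    have hjlt : j < Fin.last n := lt_of_lt_of_le hji (Fin.le_last i)
    have hval : ((j+1 : Fin (n+1)) : ℕ) = (j:ℕ) + 1 := Fin.val_add_one_of_lt hjlt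
    rw [hCm]
    simp only [submatrix_apply, id_eq, hrot]
    rw [hB]
    simp only [of_apply]
    rw [N, of_apply, if_neg, if_neg, add_zero]
    · intro hc
      rw [Fin.ext_iff] at hc
      simp [hval] at hc
    · rw [hval]
      intro hc
      have : (j:ℕ) = (i:ℕ) := by omega
      exact absurd hji (by simp [Fin.ext_iff.mpr this, lt_irrefl])
  have hdiag : ∀ i : Fin (n+1), Cm i i = if i = Fin.last n then u t (Fin.last n) else ((i:ℕ)+1 : ℕ) := by
    intro i
    rcases eq_or_ne i (Fin.last n) with hi | hi
    · subst hi
      rw [if_pos rfl, hCm]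
      simp only [submatrix_apply, id_eq, hrot]
      rw [Fin.last_add_one, hB]
      simp only [of_apply]
      rw [N, of_apply]
      simp
    · rw [if_neg hi, hCm]
      have hilt : i < Fin.last n := lt_of_le_of_ne (Fin.le_last i) hi
      have hval : ((i+1 : Fin (n+1)) : ℕ) = (i:ℕ) + 1 := Fin.val_add_one_of_lt hilt
      simp only [submatrix_apply, id_eq, hrot]
      rw [hB]
      simp only [of_apply]
      rw [N, of_apply, if_pos hval, if_neg, add_zero, hval]
      · intro hc
        rw [Fin.ext_iff] at hc
        simp [hval] at hc
  have hdetC : Cm.det = (n.factorial : ℝ) * u t (Fin.last n) := by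
    rw [Matrix.det_of_upperTriangular hCtri]
    calc ∏ i, Cm i i = (∏ i : Fin n, Cm i.castSucc i.castSucc) * Cm (Fin.last n) (Fin.last n) := by
          rw [Fin.prod_univ_castSucc]
      _ = (∏ i : Fin n, (((i:ℕ)+1 : ℕ):ℝ)) * u t (Fin.last n) := by
          rw [hdiag (Fin.last n), if_pos rfl]
          congr 1
          refine Finset.prod_congr rfl fun i _ => ?_
          rw [hdiag, if_neg (Fin.castSucc_lt_last i).ne]
          simp
      _ = (n.factorial : ℝ) * u t (Fin.last n) := by rw [fact_prod]
  have hsign : ((Equiv.Perm.sign (finRotate (n + 1)) : ℤ) : ℝ) = (-1:ℝ)^n := by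
    rw [sign_finRotate]
    push_cast
    ring
  rw [hdetC, hsign] at hperm
  have hpow : (-1:ℝ)^n * (-1:ℝ)^n = 1 := by
    rw [← mul_pow]
    norm_num
  calc B.det = (-1:ℝ)^n * ((-1:ℝ)^n * B.det) := by rw [← mul_assoc, hpow, one_mul]
    _ = (-1:ℝ)^n * ((n.factorial:ℝ) * u t (Fin.last n)) := by rw [← hperm]

end DetM
end Part2
section Part3
open Finset Polynomial Matrix
namespace DetM
variable {n : ℕ} (t : Fin (n + 1) → ℝ)

lemma detNY (ht : Function.Injective t) :
    (N n + of fun i j => u t i * vv t j).det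
      = (-1:ℝ)^n * ((n.factorial:ℝ) * w t (Fin.last n)) := by
  have h := congrArg Matrix.det (NYU t ht)
  rw [Matrix.det_mul, detU, mul_one] at h
  rw [h, detB2 t ht, u_last t ht]

noncomputable def Dhat : Matrix (Fin n) (Fin n) ℝ :=
  (D t).submatrix Fin.castSucc Fin.castSucc

lemma detDhat (ht : Function.Injective t) :
    (Dhat t).det = (-1:ℝ)^n * ((n.factorial:ℝ) * w t (Fin.last n)) := by
  classical
  set e1 : Fin (n+1) → ℝ := (Pi.single (Fin.last n) (1:ℝ)) with he1
  set X2 : Matrix (Fin (n+1)) (Fin (n+1)) ℝ :=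
    (D t).updateCol (Fin.last n) e1 with hX2
  set X3 : Matrix (Fin (n+1)) (Fin (n+1)) ℝ := X2.updateRow (Fin.last n) e1 with hX3
  -- step 1 : det X2 = det (N + Y)
  have hstep1 : X2.det = (N n + of fun i j => u t i * vv t j).det := by
    have hcol : (fun i => D t i (Fin.last n) + e1 i)
        = (fun i => D t i (Fin.last n)) + e1 := rfl
    have hadd := Matrix.det_updateCol_add (D t) (Fin.last n)
      (fun i => D t i (Fin.last n)) e1
    have hself : (D t).updateCol (Fin.last n) (fun i => D t i (Fin.last n)) = D t := by
      exact Matrix.updateCol_eq_self (D t) (Fin.last n)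
    rw [hself, detD_zero t ht, zero_add] at hadd
    have hX1D : (D t).updateCol (Fin.last n)
        ((fun i => D t i (Fin.last n)) + e1)
        = of fun i j => D t i j + (if i = Fin.last n ∧ j = Fin.last n then 1 else 0) := by
      ext i j
      rw [Matrix.updateCol_apply, of_apply]
      rcases eq_or_ne j (Fin.last n) with hj | hj
      · subst hj
        rw [if_pos rfl, he1]
        simp only [Pi.add_apply, Pi.single_apply]
        by_cases hi : i = Fin.last n <;> simp [hi]
      · rw [if_neg hj, if_neg (fun hc => hj hc.2), add_zero]
    rw [hX1D] at hadd
    rw [← hadd, detDplus t ht]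
  -- step 2 : det X2 = det X3
  have hstep2 : X2.det = X3.det := by
    set r0 : Fin (n+1) → ℝ :=
      fun q => if q = Fin.last n then 0 else D t (Fin.last n) q with hr0
    have hsplit : X2 (Fin.last n) = r0 + e1 := by
      funext q
      rw [hX2, Matrix.updateCol_apply, hr0, he1]
      simp only [Pi.add_apply, Pi.single_apply]
      by_cases hq : q = Fin.last n <;> simp [hq]
    have hzero : (X2.updateRow (Fin.last n) r0).det = 0 := by
      apply Matrix.det_eq_zero_of_column_eq_zero (Fin.last n)
      intro i
      rw [Matrix.updateRow_apply]
      rcases eq_or_ne i (Fin.last n) with hi | hi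
      · rw [if_pos hi, hr0]
        simp
      · rw [if_neg hi, hX2, Matrix.updateCol_apply, if_pos rfl, he1,
          Pi.single_apply, if_neg hi]
    calc X2.det = (X2.updateRow (Fin.last n) (X2 (Fin.last n))).det := by
          rw [Matrix.updateRow_eq_self]
      _ = (X2.updateRow (Fin.last n) (r0 + e1)).det := by rw [hsplit]
      _ = (X2.updateRow (Fin.last n) r0).det + X3.det := by
          rw [Matrix.det_updateRow_add]
      _ = X3.det := by rw [hzero, zero_add]
  -- step 3 : det X3 = det Dhat
  have hstep3 : X3.det = (Dhat t).det := by
    rw [← Matrix.det_submatrix_equiv_self finSumFinEquiv X3]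
    have hblock : X3.submatrix finSumFinEquiv finSumFinEquiv
        = Matrix.fromBlocks (Dhat t) 0 0 (1 : Matrix (Fin 1) (Fin 1) ℝ) := by
      have hl : ∀ i : Fin n, (finSumFinEquiv (Sum.inl i) : Fin (n+1)) = i.castSucc := by
        intro i
        rw [finSumFinEquiv_apply_left]
        rfl
      have hr : ∀ i : Fin 1, (finSumFinEquiv (Sum.inr i) : Fin (n+1)) = Fin.last n := by
        intro i
        rw [finSumFinEquiv_apply_right]
        exact Fin.ext (by simp)
      ext i j
      cases i with
      | inl i =>
        cases j with
        | inl j =>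
          rw [Matrix.submatrix_apply, hl, hl, hX3, Matrix.updateRow_apply,
            if_neg (Fin.castSucc_lt_last i).ne, hX2, Matrix.updateCol_apply,
            if_neg (Fin.castSucc_lt_last j).ne]
          rfl
        | inr j =>
          rw [Matrix.submatrix_apply, hl, hr, hX3, Matrix.updateRow_apply,
            if_neg (Fin.castSucc_lt_last i).ne, hX2, Matrix.updateCol_apply,
            if_pos rfl, he1, Pi.single_apply, if_neg (Fin.castSucc_lt_last i).ne]
          rfl
      | inr i =>
        cases j with
        | inl j =>
          rw [Matrix.submatrix_apply, hr, hl, hX3, Matrix.updateRow_apply,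
            if_pos rfl, he1, Pi.single_apply, if_neg (Fin.castSucc_lt_last j).ne]
          rfl
        | inr j =>
          rw [Matrix.submatrix_apply, hr, hr, hX3, Matrix.updateRow_apply,
            if_pos rfl, he1, Pi.single_apply, if_pos rfl]
          rw [Matrix.fromBlocks_apply₂₂, Subsingleton.elim i j, Matrix.one_apply_eq]
    rw [hblock, Matrix.det_fromBlocks_zero₂₁, Matrix.det_one, mul_one]
  rw [← hstep3, ← hstep2, hstep1, detNY t ht]

lemma w_last_eq : w t (Fin.last n) = ∏ j : Fin n, (t (Fin.last n) - t j.castSucc)⁻¹ := by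
  rw [w]
  have himg : (univ : Finset (Fin (n+1))).erase (Fin.last n)
      = Finset.image Fin.castSucc univ := by
    ext k
    simp only [mem_erase, mem_univ, and_true, Finset.mem_image, true_and]
    constructor
    · intro hk
      obtain ⟨y, hy⟩ := Fin.eq_castSucc_of_ne_last hk
      exact ⟨y, hy⟩
    · rintro ⟨y, _, rfl⟩
      exact (Fin.castSucc_lt_last y).ne
  rw [himg, Finset.prod_image (fun a _ b _ h => Fin.castSucc_injective n h)]

end DetM
end Part3
section Part4
open Finset Polynomial Matrix

theorem det_M'_formula
    (n : ℕ) (t : Fin (n + 1) → ℝ) (ht : Function.Injective t) :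
    Matrix.det (Matrix.of fun i j : Fin n =>
      if i = j then ∑ k ∈ univ.erase i.castSucc, 1 / (t k - t i.castSucc)
      else 1 / (t i.castSucc - t j.castSucc)) =
    (n.factorial : ℝ) * ∏ j : Fin n, 1 / (t (Fin.last n) - t j.castSucc) := by
  classical
  have hA : (Matrix.of fun i j : Fin n =>
      if i = j then ∑ k ∈ univ.erase i.castSucc, 1 / (t k - t i.castSucc)
      else 1 / (t i.castSucc - t j.castSucc))
      = -(Matrix.diagonal (fun i : Fin n => (DetM.w t i.castSucc)⁻¹) * (DetM.Dhat t)ᵀ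
          * Matrix.diagonal (fun j : Fin n => DetM.w t j.castSucc)) := by
    ext i j
    rw [Matrix.neg_apply, Matrix.mul_diagonal, Matrix.diagonal_mul, Matrix.of_apply,
      Matrix.transpose_apply]
    have hDhat : DetM.Dhat t j i = DetM.D t j.castSucc i.castSucc := rfl
    rcases eq_or_ne i j with hij | hij
    · subst hij
      rw [if_pos rfl, hDhat, DetM.D_diag t ht]
      have hwne := DetM.w_ne t ht i.castSucc
      have hmid : (DetM.w t i.castSucc)⁻¹
          * (∑ k ∈ univ.erase i.castSucc, (t i.castSucc - t k)⁻¹)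
          * DetM.w t i.castSucc
          = ∑ k ∈ univ.erase i.castSucc, (t i.castSucc - t k)⁻¹ := by
        field_simp
      rw [hmid, ← Finset.sum_neg_distrib]
      refine Finset.sum_congr rfl fun k _ => ?_
      rw [one_div, ← inv_neg, neg_sub]
    · rw [if_neg hij, hDhat]
      have hcs : j.castSucc ≠ i.castSucc := fun h => hij (Fin.castSucc_injective n h).symm
      rw [DetM.D_off t j.castSucc i.castSucc hcs]
      have hwne := DetM.w_ne t ht i.castSucc
      have hmid : (DetM.w t i.castSucc)⁻¹
          * (DetM.w t i.castSucc * ∏ k ∈ (univ.erase i.castSucc).erase j.castSucc,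
              (t j.castSucc - t k))
          * DetM.w t j.castSucc
          = DetM.w t j.castSucc * ∏ k ∈ (univ.erase j.castSucc).erase i.castSucc,
              (t j.castSucc - t k) := by
        rw [Finset.erase_right_comm]
        field_simp
      rw [hmid]
      have hkey := DetM.key_w_mul t ht j.castSucc i.castSucc
        (mem_erase.mpr ⟨fun h => hij (Fin.castSucc_injective n h), mem_univ _⟩)
      rw [DetM.w, hkey, one_div, ← inv_neg, neg_sub]
  rw [hA, Matrix.det_neg, Matrix.det_mul, Matrix.det_mul, Matrix.det_diagonal,
    Matrix.det_diagonal, Matrix.det_transpose, DetM.detDhat t ht, Fintype.card_fin]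
  have hw : ∀ i : Fin n, DetM.w t i.castSucc ≠ 0 := fun i => DetM.w_ne t ht _
  have hab : (∏ i : Fin n, (DetM.w t i.castSucc)⁻¹) * (∏ i : Fin n, DetM.w t i.castSucc) = 1 := by
    rw [← Finset.prod_mul_distrib]
    rw [Finset.prod_congr rfl (fun i _ => inv_mul_cancel₀ (hw i))]
    exact Finset.prod_const_one
  have hpow : (-1:ℝ)^n * (-1:ℝ)^n = 1 := by
    rw [← mul_pow]
    norm_num
  have hwl : DetM.w t (Fin.last n) = ∏ j : Fin n, 1 / (t (Fin.last n) - t j.castSucc) := by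
    rw [DetM.w_last_eq]
    exact Finset.prod_congr rfl fun j _ => (one_div _).symm
  calc (-1:ℝ)^n * ((∏ i : Fin n, (DetM.w t i.castSucc)⁻¹)
        * ((-1:ℝ)^n * ((n.factorial:ℝ) * DetM.w t (Fin.last n)))
        * (∏ i : Fin n, DetM.w t i.castSucc))
      = ((∏ i : Fin n, (DetM.w t i.castSucc)⁻¹) * (∏ i : Fin n, DetM.w t i.castSucc))
        * (((-1:ℝ)^n * (-1:ℝ)^n) * ((n.factorial:ℝ) * DetM.w t (Fin.last n))) := by ring
    _ = (n.factorial:ℝ) * DetM.w t (Fin.last n) := by rw [hab, hpow, one_mul, one_mul]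
    _ = (n.factorial : ℝ) * ∏ j : Fin n, 1 / (t (Fin.last n) - t j.castSucc) := by rw [hwl]

end Part4
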